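/- For every degree d and every n ∈ ℕ there exists a constant C_d(n) such that for every approximation pair (X,F) with dim(F) = n we have d(X,F) ≤ C_d(n). In particular, every finite-dimensional normed space is d-small. -/

import Mathlib

/-- A degree: a map `d` assigning to each approximation pair `(X, F)` (a Banach space `X`
together with a finite-dimensional subspace `F`) a nonnegative real, admitting a control
function `K`, non-decreasing in both variables with `lim_{s → 1⁺} K(s, t) = t`, such that
`d(Y, G) ≤ K(‖φ‖, d(X, F))` for every morphism `φ = (S, T) : (X, F) → (Y, G)`
(with the convention `‖φ‖ = 1` when `G = 0`). -/
structure Degree where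
  d : ∀ (X : Type) [NormedAddCommGroup X] [NormedSpace ℝ X] [CompleteSpace X],
    Submodule ℝ X → ℝ
  nonneg : ∀ (X : Type) [NormedAddCommGroup X] [NormedSpace ℝ X] [CompleteSpace X]
    (F : Submodule ℝ X), 0 ≤ d X F
  K : ℝ → ℝ → ℝ
  K_mono : ∀ ⦃s s' t t' : ℝ⦄, 1 ≤ s → s ≤ s' → 0 ≤ t → t ≤ t' → K s t ≤ K s' t'
  K_lim : ∀ t : ℝ, 0 ≤ t →
    Filter.Tendsto (fun s => K s t) (nhdsWithin 1 (Set.Ioi 1)) (nhds t)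
  bound : ∀ (X : Type) [NormedAddCommGroup X] [NormedSpace ℝ X] [CompleteSpace X]
    (Y : Type) [NormedAddCommGroup Y] [NormedSpace ℝ Y] [CompleteSpace Y]
    (F : Submodule ℝ X) (G : Submodule ℝ Y),
    FiniteDimensional ℝ F → FiniteDimensional ℝ G →
    ∀ (S : ↥G →L[ℝ] ↥F) (T : X →L[ℝ] Y),
    (∀ g : ↥G, T ((S g : X)) = (g : Y)) →
    d Y G ≤ K (@ite ℝ (G = ⊥) (Classical.dec _) 1 (‖S‖ * ‖T‖)) (d X F)

/-- A Banach space is `d`-small if the degrees of its finite-dimensional subspaces are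
uniformly bounded. -/
def DSmall (D : Degree) (X : Type) [NormedAddCommGroup X] [NormedSpace ℝ X]
    [CompleteSpace X] : Prop :=
  ∃ M : ℝ, ∀ F : Submodule ℝ X, FiniteDimensional ℝ F → D.d X F ≤ M

/-- A Banach space is `d`-large if it is not `d`-small. -/
def DLarge (D : Degree) (X : Type) [NormedAddCommGroup X] [NormedSpace ℝ X]
    [CompleteSpace X] : Prop :=
  ¬ DSmall D X

/-- A Banach space `X` is asymptotically `d`-small if there is `K` such that for every `n`
there is a finite-codimensional (closed) subspace `X_n ⊆ X` with `d(X, F) ≤ K` for every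
`n`-dimensional subspace `F ⊆ X_n`. -/
def AsympDSmall (D : Degree) (X : Type) [NormedAddCommGroup X] [NormedSpace ℝ X]
    [CompleteSpace X] : Prop :=
  ∃ K : ℝ, ∀ n : ℕ, ∃ Xn : Submodule ℝ X, IsClosed (Xn : Set X) ∧
    FiniteDimensional ℝ (X ⧸ Xn) ∧
    ∀ F : Submodule ℝ X, F ≤ Xn → FiniteDimensional ℝ F →
      Module.finrank ℝ F = n → D.d X F ≤ K



open Module

lemma sum_pow_Iio (n : ℕ) (i : Fin n) : ∑ j ∈ Finset.Iio i, (2:ℝ)^(j:ℕ) = 2^(i:ℕ) - 1 := by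
  have h1 : ∑ j ∈ Finset.Iio i, (2:ℝ)^(j:ℕ) = ∑ k ∈ Finset.range (i:ℕ), (2:ℝ)^k := by
    rw [← Nat.Iio_eq_range, ← Fin.map_valEmbedding_Iio, Finset.sum_map]; rfl
  rw [h1]
  induction (i : ℕ) with
  | zero => simp
  | succ m ihm => rw [Finset.sum_range_succ, ihm]; ring

lemma coord_bound {E : Type} [NormedAddCommGroup E] [NormedSpace ℝ E] {n : ℕ}
    (e : Fin n → E) (f : Fin n → E →L[ℝ] ℝ)
    (he1 : ∀ i, ‖e i‖ = 1)
    (hf1 : ∀ i, ‖f i‖ ≤ 1) (hfe : ∀ i, f i (e i) = 1)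
    (hfe0 : ∀ i j, i < j → f i (e j) = 0)
    (c : Fin n → ℝ) (x : E) (hx : ∑ j, c j • e j = x) :
    ∀ i, |c i| ≤ 2 ^ (i : ℕ) * ‖x‖ := by
  have main : ∀ i : Fin n, (∀ j, j < i → |c j| ≤ 2 ^ (j:ℕ) * ‖x‖) →
      |c i| ≤ 2 ^ (i:ℕ) * ‖x‖ := by
    intro i ih
    have hsplit : f i x = ∑ j ∈ Finset.Iio i, c j * f i (e j) + c i := by
      rw [← hx, map_sum]
      have ht : ∀ j, f i (c j • e j) = c j * f i (e j) := fun j => by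
        rw [map_smul]; rfl
      simp_rw [ht]
      have hu : (Finset.univ : Finset (Fin n)) = Finset.Iio i ∪ Finset.Ici i := by
        ext j; simp [lt_or_ge]
      rw [hu, Finset.sum_union (by simp [Finset.disjoint_left])]
      congr 1
      rw [Finset.sum_eq_single_of_mem i (by simp)
        (fun j hj hne => by
          rw [hfe0 i j (lt_of_le_of_ne (Finset.mem_Ici.mp hj) (Ne.symm hne)), mul_zero])]
      rw [hfe i, mul_one]
    have hci : c i = f i x - ∑ j ∈ Finset.Iio i, c j * f i (e j) := by linarith [hsplit]
    have hbound : |c i| ≤ ‖x‖ + ∑ j ∈ Finset.Iio i, 2 ^ (j:ℕ) * ‖x‖ := by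
      rw [hci]
      refine (abs_sub _ _).trans ?_
      gcongr
      · calc |f i x| = ‖f i x‖ := rfl
          _ ≤ ‖f i‖ * ‖x‖ := (f i).le_opNorm x
          _ ≤ 1 * ‖x‖ := by gcongr; exact hf1 i
          _ = ‖x‖ := one_mul _
      · refine (Finset.abs_sum_le_sum_abs _ _).trans ?_
        apply Finset.sum_le_sum
        intro j hj
        have hji : j < i := Finset.mem_Iio.mp hj
        calc |c j * f i (e j)| = |c j| * |f i (e j)| := abs_mul _ _
          _ ≤ (2 ^ (j:ℕ) * ‖x‖) * 1 := by
              apply mul_le_mul (ih j hji) ?_ (abs_nonneg _) (by positivity)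
              calc |f i (e j)| = ‖f i (e j)‖ := rfl
                _ ≤ ‖f i‖ * ‖e j‖ := (f i).le_opNorm _
                _ ≤ 1 * 1 := by rw [he1 j]; exact mul_le_mul (hf1 i) le_rfl (by norm_num) (by norm_num)
                _ = 1 := one_mul 1
          _ = 2 ^ (j:ℕ) * ‖x‖ := mul_one _
    calc |c i| ≤ ‖x‖ + ∑ j ∈ Finset.Iio i, 2 ^ (j:ℕ) * ‖x‖ := hbound
      _ = ‖x‖ + (2 ^ (i:ℕ) - 1) * ‖x‖ := by rw [← Finset.sum_mul, sum_pow_Iio]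
      _ = 2 ^ (i:ℕ) * ‖x‖ := by ring
  have H : ∀ m : ℕ, ∀ i : Fin n, (i:ℕ) < m → |c i| ≤ 2 ^ (i:ℕ) * ‖x‖ := by
    intro m
    induction m with
    | zero => intro i hi; omega
    | succ m ihm =>
      intro i hi
      exact main i (fun j hj => ihm j (by omega))
  exact fun i => H n i i.isLt


lemma flag : ∀ (n : ℕ) (E : Type) [NormedAddCommGroup E] [NormedSpace ℝ E]
    [FiniteDimensional ℝ E], finrank ℝ E = n →
    ∃ (e : Fin n → E) (f : Fin n → E →L[ℝ] ℝ),
      (∀ i, ‖e i‖ = 1) ∧ (∀ i, ‖f i‖ ≤ 1) ∧ (∀ i, f i (e i) = 1) ∧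
      (∀ i j, i < j → f i (e j) = 0) := by
  intro n
  induction n with
  | zero =>
    intro E _ _ _ _
    exact ⟨Fin.elim0, Fin.elim0, fun i => i.elim0, fun i => i.elim0, fun i => i.elim0,
      fun i => i.elim0⟩
  | succ n ih =>
    intro E _ _ _ hE
    have hnt : Nontrivial E := Module.nontrivial_of_finrank_pos (R := ℝ) (by omega)
    obtain ⟨x, hx⟩ := exists_ne (0 : E)
    set e0 : E := ‖x‖⁻¹ • x with he0def
    have he0 : ‖e0‖ = 1 := by
      rw [he0def, norm_smul, norm_inv, norm_norm, inv_mul_cancel₀ (norm_ne_zero_iff.mpr hx)]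
    have he0ne : e0 ≠ 0 := by
      intro h; rw [h, norm_zero] at he0; norm_num at he0
    obtain ⟨f0, hf0norm, hf0e0⟩ := exists_dual_vector ℝ e0 (norm_ne_zero_iff.mpr he0ne)
    rw [he0] at hf0e0
    set V : Submodule ℝ E := LinearMap.ker (f0 : E →ₗ[ℝ] ℝ) with hV
    have hVrank : finrank ℝ V = n := by
      have h1 := LinearMap.finrank_range_add_finrank_ker (f0.toLinearMap)
      have hr : LinearMap.range f0.toLinearMap = ⊤ := by
        rw [LinearMap.range_eq_top]
        intro r
        exact ⟨r • e0, by simp [hf0e0]⟩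
      rw [hr, finrank_top, finrank_self] at h1
      have : LinearMap.ker f0.toLinearMap = V := rfl
      rw [this] at h1
      omega
    obtain ⟨e', f', he'1, hf'1, hf'e', hf'0⟩ := ih ↥V hVrank
    choose g hg hgnorm using fun i => exists_extension_norm_eq V (f' i)
    refine ⟨Fin.cons e0 (fun i => (e' i : E)), Fin.cons f0 g, ?_, ?_, ?_, ?_⟩
    · intro i
      refine Fin.cases ?_ ?_ i
      · simpa using he0
      · intro i; simpa using he'1 i
    · intro i
      refine Fin.cases ?_ ?_ i
      · simpa using le_of_eq hf0norm
      · intro i; rw [Fin.cons_succ, hgnorm i]; exact hf'1 i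
    · intro i
      refine Fin.cases ?_ ?_ i
      · simpa using hf0e0
      · intro i; rw [Fin.cons_succ, Fin.cons_succ, hg i (e' i)]; exact hf'e' i
    · intro i j hij
      rcases Fin.eq_zero_or_eq_succ j with rfl | ⟨j', rfl⟩
      · exact absurd hij (by simp)
      · rcases Fin.eq_zero_or_eq_succ i with rfl | ⟨i', rfl⟩
        · simp only [Fin.cons_zero, Fin.cons_succ]
          exact (e' j').2
        · simp only [Fin.cons_succ]
          rw [hg i' (e' j')]
          exact hf'0 i' j' (Fin.succ_lt_succ_iff.mp hij)

lemma exists_maps (n : ℕ) (hn : 0 < n) (E : Type) [NormedAddCommGroup E] [NormedSpace ℝ E]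
    [FiniteDimensional ℝ E] (hE : finrank ℝ E = n) :
    ∃ (u : EuclideanSpace ℝ (Fin n) →L[ℝ] E) (v : E →L[ℝ] EuclideanSpace ℝ (Fin n)),
      (∀ x : E, u (v x) = x) ∧ ‖u‖ ≤ n ∧ ‖v‖ ≤ (n : ℝ) * 2 ^ n := by
  obtain ⟨e, f, he1, hf1, hfe, hf0⟩ := flag n E hE
  have : Nonempty (Fin n) := ⟨⟨0, hn⟩⟩
  have hind : LinearIndependent ℝ e := by
    rw [Fintype.linearIndependent_iff]
    intro c hc i
    have := coord_bound e f he1 hf1 hfe hf0 c 0 hc i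
    rw [norm_zero, mul_zero] at this
    have h2 := abs_nonneg (c i)
    exact abs_eq_zero.mp (le_antisymm this h2)
  have hcard : Fintype.card (Fin n) = finrank ℝ E := by simp [hE]
  set b := basisOfLinearIndependentOfCardEqFinrank hind hcard with hbdef
  have hb : ⇑b = e := coe_basisOfLinearIndependentOfCardEqFinrank hind hcard
  set ℓ : E ≃ₗ[ℝ] EuclideanSpace ℝ (Fin n) :=
    b.equivFun.trans (WithLp.linearEquiv 2 ℝ (Fin n → ℝ)).symm with hldef
  set w : E ≃L[ℝ] EuclideanSpace ℝ (Fin n) := ℓ.toContinuousLinearEquiv with hwdef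
  have hcoord : ∀ (x : E) (i : Fin n), (w x) i = b.equivFun x i := fun x i => rfl
  have hsymm : ∀ (c : EuclideanSpace ℝ (Fin n)), w.symm c = ∑ i, c i • e i := by
    intro c
    show ℓ.symm c = _
    rw [hldef]
    simp only [LinearEquiv.trans_symm, LinearEquiv.trans_apply, LinearEquiv.symm_symm]
    rw [Basis.equivFun_symm_apply]
    simp [hb]
  refine ⟨(w.symm : EuclideanSpace ℝ (Fin n) →L[ℝ] E), (w : E →L[ℝ] EuclideanSpace ℝ (Fin n)),
    ?_, ?_, ?_⟩
  · intro x; simp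
  · apply ContinuousLinearMap.opNorm_le_bound _ (by positivity)
    intro c
    show ‖w.symm c‖ ≤ (n : ℝ) * ‖c‖
    rw [hsymm]
    calc ‖∑ i, c i • e i‖ ≤ ∑ i, ‖c i • e i‖ := norm_sum_le _ _
      _ ≤ ∑ _i : Fin n, ‖c‖ := by
          apply Finset.sum_le_sum
          intro i _
          rw [norm_smul, he1 i, mul_one]
          calc ‖c i‖ = Real.sqrt (‖c i‖ ^ 2) := (Real.sqrt_sq (norm_nonneg _)).symm
            _ ≤ ‖c‖ := by
                rw [EuclideanSpace.norm_eq]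
                exact Real.sqrt_le_sqrt (Finset.single_le_sum
                  (f := fun j => ‖c j‖ ^ 2) (fun j _ => by positivity) (Finset.mem_univ i))
      _ = (n : ℝ) * ‖c‖ := by simp [Finset.sum_const, Finset.card_univ, mul_comm]
  · apply ContinuousLinearMap.opNorm_le_bound _ (by positivity)
    intro x
    show ‖w x‖ ≤ (n : ℝ) * 2 ^ n * ‖x‖
    have hx : ∑ i, b.equivFun x i • e i = x := by
      conv_rhs => rw [← b.sum_equivFun x]
      simp [hb]
    have hci : ∀ i, |b.equivFun x i| ≤ 2 ^ n * ‖x‖ := by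
      intro i
      calc |b.equivFun x i| ≤ 2 ^ (i:ℕ) * ‖x‖ := coord_bound e f he1 hf1 hfe hf0 _ x hx i
        _ ≤ 2 ^ n * ‖x‖ := by gcongr; norm_num; exact le_of_lt i.isLt
    rw [EuclideanSpace.norm_eq]
    have hsum : ∑ i, ‖(w x) i‖ ^ 2 ≤ (n : ℝ) * (2 ^ n * ‖x‖) ^ 2 := by
      calc ∑ i, ‖(w x) i‖ ^ 2 ≤ ∑ _i : Fin n, (2 ^ n * ‖x‖) ^ 2 := by
            apply Finset.sum_le_sum
            intro i _
            have : ‖(w x) i‖ = |b.equivFun x i| := by rw [hcoord]; rfl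
            rw [this]
            have h0 : (0:ℝ) ≤ 2 ^ n * ‖x‖ := by positivity
            exact pow_le_pow_left₀ (abs_nonneg _) (hci i) 2
        _ = (n : ℝ) * (2 ^ n * ‖x‖) ^ 2 := by simp [Finset.sum_const, Finset.card_univ, mul_comm]
    calc Real.sqrt (∑ i, ‖(w x) i‖ ^ 2) ≤ Real.sqrt ((n:ℝ) * (2^n * ‖x‖)^2) :=
          Real.sqrt_le_sqrt hsum
      _ ≤ Real.sqrt (((n:ℝ) * 2^n * ‖x‖)^2) := by
          apply Real.sqrt_le_sqrt
          have h1 : (1:ℝ) ≤ (n:ℝ) := by exact_mod_cast hn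
          nlinarith [norm_nonneg x, pow_pos (by norm_num : (0:ℝ) < 2) n]
      _ = (n:ℝ) * 2^n * ‖x‖ := Real.sqrt_sq (by positivity)

lemma bound_via (D : Degree) (Z : Type) [NormedAddCommGroup Z] [NormedSpace ℝ Z]
    [CompleteSpace Z] [FiniteDimensional ℝ Z]
    (X : Type) [NormedAddCommGroup X] [NormedSpace ℝ X] [CompleteSpace X]
    (F : Submodule ℝ X) (hFfd : FiniteDimensional ℝ F) (hFbot : F ≠ ⊥)
    (u : Z →L[ℝ] ↥F) (v : ↥F →L[ℝ] Z) (huv : ∀ x, u (v x) = x)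
    (a b : ℝ) (hu : ‖u‖ ≤ a) (hv : ‖v‖ ≤ b) :
    D.d X F ≤ D.K (max 1 (b * a)) (D.d Z ⊤) := by
  set S : ↥F →L[ℝ] ↥(⊤ : Submodule ℝ Z) :=
    v.codRestrict ⊤ (fun x => Submodule.mem_top) with hSdef
  set T : Z →L[ℝ] X := (Submodule.subtypeL F).comp u with hTdef
  have hST : ∀ g : ↥F, T ((S g : Z)) = (g : X) := by
    intro g
    show (u (v g) : X) = (g : X)
    rw [huv g]
  have hSnorm : ∀ g : ↥F, ‖S g‖ = ‖v g‖ := fun g => rfl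
  have hS : ‖S‖ ≤ ‖v‖ := by
    apply ContinuousLinearMap.opNorm_le_bound _ (norm_nonneg v)
    intro g
    rw [hSnorm g]
    exact v.le_opNorm g
  have hT : ‖T‖ ≤ ‖u‖ := by
    apply ContinuousLinearMap.opNorm_le_bound _ (norm_nonneg u)
    intro c
    calc ‖T c‖ = ‖u c‖ := rfl
      _ ≤ ‖u‖ * ‖c‖ := u.le_opNorm c
  have hone : 1 ≤ ‖S‖ * ‖T‖ := by
    obtain ⟨x, hxF, hx0⟩ := Submodule.exists_mem_ne_zero_of_ne_bot hFbot
    set g : ↥F := ⟨x, hxF⟩ with hgdef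
    have hgne : ‖g‖ ≠ 0 := by simpa [hgdef] using hx0
    have hchain : ‖g‖ ≤ ‖S‖ * ‖T‖ * ‖g‖ := by
      calc ‖g‖ = ‖T ((S g : Z))‖ := by rw [hST g]; rfl
        _ ≤ ‖T‖ * ‖(S g : Z)‖ := T.le_opNorm _
        _ ≤ ‖T‖ * (‖S‖ * ‖g‖) := by
            apply mul_le_mul_of_nonneg_left (S.le_opNorm g) (norm_nonneg T)
        _ = ‖S‖ * ‖T‖ * ‖g‖ := by ring
    have hgpos : 0 < ‖g‖ := lt_of_le_of_ne (norm_nonneg g) (Ne.symm hgne)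
    nlinarith
  have h := D.bound Z X ⊤ F inferInstance hFfd S T hST
  rw [if_neg hFbot] at h
  refine h.trans (D.K_mono hone ?_ (D.nonneg _ _) le_rfl)
  refine le_max_of_le_right ?_
  have h0S : 0 ≤ ‖S‖ := norm_nonneg S
  have h0b : 0 ≤ b := h0S.trans (hS.trans hv)
  exact mul_le_mul (hS.trans hv) (hT.trans hu) (norm_nonneg T) h0b

/-- for every degree `d` and `n ∈ ℕ` there is a constant `C_d(n)` bounding
`d(X, F)` over all approximation pairs with `dim F = n`; in particular every
finite-dimensional normed space is `d`-small. -/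
theorem statement7 (D : Degree) :
    (∀ n : ℕ, ∃ C : ℝ,
      ∀ (X : Type) [NormedAddCommGroup X] [NormedSpace ℝ X] [CompleteSpace X]
        (F : Submodule ℝ X), FiniteDimensional ℝ F → Module.finrank ℝ F = n →
        D.d X F ≤ C) ∧
    (∀ (X : Type) [NormedAddCommGroup X] [NormedSpace ℝ X] [CompleteSpace X],
      FiniteDimensional ℝ X → DSmall D X) := by
  have part1 : ∀ n : ℕ, ∃ C : ℝ,
      ∀ (X : Type) [NormedAddCommGroup X] [NormedSpace ℝ X] [CompleteSpace X]
        (F : Submodule ℝ X), FiniteDimensional ℝ F → Module.finrank ℝ F = n →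
        D.d X F ≤ C := by
    intro n
    rcases Nat.eq_zero_or_pos n with rfl | hn
    · refine ⟨D.K 1 (D.d (EuclideanSpace ℝ (Fin 0)) ⊤), ?_⟩
      intro X _ _ _ F hFfd hF0
      have hFbot : F = ⊥ := Submodule.finrank_eq_zero.mp hF0
      have h := D.bound (EuclideanSpace ℝ (Fin 0)) X ⊤ F inferInstance hFfd 0 0 ?_
      · rwa [if_pos hFbot] at h
      · intro g
        have hg0 : (g : X) = 0 := by
          have hg : (g : X) ∈ (⊥ : Submodule ℝ X) := hFbot ▸ g.2
          simpa using hg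
        simp [hg0]
    · refine ⟨D.K (max 1 ((n : ℝ) * 2 ^ n * n)) (D.d (EuclideanSpace ℝ (Fin n)) ⊤), ?_⟩
      intro X _ _ _ F hFfd hFn
      obtain ⟨u, v, huv, hu, hv⟩ := exists_maps n hn ↥F hFn
      have hFbot : F ≠ ⊥ := by
        intro h
        rw [h, finrank_bot] at hFn
        omega
      exact bound_via D (EuclideanSpace ℝ (Fin n)) X F hFfd hFbot u v huv
        (n : ℝ) ((n : ℝ) * 2 ^ n) hu hv
  refine ⟨part1, ?_⟩
  intro X _ _ _ hXfd
  choose C hC using part1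
  set N := finrank ℝ X with hN
  refine ⟨((Finset.range (N + 1)).image C).max' ?_, ?_⟩
  · exact (Finset.image_nonempty).mpr ⟨0, Finset.mem_range.mpr (Nat.succ_pos N)⟩
  · intro F hFfd
    have hle : finrank ℝ F ≤ N := Submodule.finrank_le F
    refine (hC (finrank ℝ F) X F hFfd rfl).trans ?_
    apply Finset.le_max'
    exact Finset.mem_image.mpr ⟨finrank ℝ F, Finset.mem_range.mpr (by omega), rfl⟩
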